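/- arXiv:1606.04134 — 4 statements merged into one kernel-verified Lean document; each statement's English description precedes it below -/
import Mathlib

section
/- Let $0<r<1/2$ and let $P$ be the uniform Cantor distribution with ratio $r$. The set $\{S_1(1/2),\,S_2(1/2)\}=\{r/2,\;1-r/2\}$ achieves distortion error $\int\min_{a\in\{r/2,1-r/2\}}(x-a)^2\,dP(x)=r^2 V$, where $V=\frac{1-r}{4(1+r)}$. -/
open MeasureTheory
open scoped ENNReal

noncomputable def Smap (r : ℝ) (i : Fin 2) : ℝ → ℝ :=
  fun x => if i = 0 then r * x else r * x + (1 - r)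

noncomputable def Sword (r : ℝ) (σ : List (Fin 2)) : ℝ → ℝ :=
  σ.foldr (fun i g => Smap r i ∘ g) id

set_option maxHeartbeats 1000000 in
theorem stmt6 (r : ℝ) (hr1 : 0 < r) (hr2 : r < 1/2)
    (P : Measure ℝ) [IsProbabilityMeasure P]
    (hP : P = (2 : ℝ≥0∞)⁻¹ • P.map (Smap r 0) + (2 : ℝ≥0∞)⁻¹ • P.map (Smap r 1)) :
    ∫ x, min ((x - r/2)^2) ((x - (1 - r/2))^2) ∂P
      = r^2 * ((1 - r) / (4 * (1 + r))) := by
  have hr2' : r < 1 := by linarith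
  have hrne : r ≠ 0 := ne_of_gt hr1
  have hS0 : Smap r 0 = fun x => r * x := by funext x; simp [Smap]
  have hS1 : Smap r 1 = fun x => r * x + (1 - r) := by
    funext x; simp only [Smap]; rw [if_neg (by decide)]
  have hm0 : Measurable (Smap r 0) := by rw [hS0]; exact measurable_id.const_mul r
  have hm1 : Measurable (Smap r 1) := by
    rw [hS1]; exact (measurable_id.const_mul r).add_const _
  -- functional equation on sets
  have hset : ∀ s : Set ℝ, MeasurableSet s →
      P s = 2⁻¹ * P ((fun x => r * x) ⁻¹' s) + 2⁻¹ * P ((fun x => r * x + (1 - r)) ⁻¹' s) := by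
    intro s hs
    conv_lhs => rw [hP]
    rw [Measure.add_apply, Measure.smul_apply, Measure.smul_apply,
      Measure.map_apply hm0 hs, Measure.map_apply hm1 hs, hS0, hS1, smul_eq_mul, smul_eq_mul]
  have halves : ∀ x : ℝ≥0∞, 2⁻¹ * x + 2⁻¹ * x = x := by
    intro x
    rw [← ENNReal.div_eq_inv_mul, ENNReal.add_halves]
  -- preimage lemmas
  have hone_lt : (1:ℝ) < 1/r := by rw [lt_div_iff₀ hr1]; linarith
  have hpre0I : ∀ b : ℝ, (fun x => r * x) ⁻¹' Set.Ioi b = Set.Ioi (b/r) := by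
    intro b; ext x
    simp only [Set.mem_preimage, Set.mem_Ioi, div_lt_iff₀ hr1]
    constructor <;> intro h' <;> linarith [mul_comm x r]
  have hpre1I : ∀ b : ℝ, (fun x => r * x + (1 - r)) ⁻¹' Set.Ioi b
      = Set.Ioi ((b - (1 - r))/r) := by
    intro b; ext x
    simp only [Set.mem_preimage, Set.mem_Ioi, div_lt_iff₀ hr1]
    constructor <;> intro h' <;> linarith [mul_comm x r]
  have hpre0i : ∀ b : ℝ, (fun x => r * x) ⁻¹' Set.Iio b = Set.Iio (b/r) := by
    intro b; ext x
    simp only [Set.mem_preimage, Set.mem_Iio, lt_div_iff₀ hr1]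
    constructor <;> intro h' <;> linarith [mul_comm x r]
  have hpre1i : ∀ b : ℝ, (fun x => r * x + (1 - r)) ⁻¹' Set.Iio b
      = Set.Iio ((b - (1 - r))/r) := by
    intro b; ext x
    simp only [Set.mem_preimage, Set.mem_Iio, lt_div_iff₀ hr1]
    constructor <;> intro h' <;> linarith [mul_comm x r]
  -- right tail
  have htail : ∀ a : ℝ, 1 < a → P (Set.Ioi a) = 0 := by
    have step : ∀ b : ℝ, 1 ≤ b → P (Set.Ioi b) ≤ P (Set.Ioi (1 + (b - 1) * (1/r))) := by
      intro b hb
      have h := hset (Set.Ioi b) measurableSet_Ioi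
      rw [hpre0I b, hpre1I b] at h
      have hc : (b - (1 - r))/r = 1 + (b - 1) * (1/r) := by field_simp; ring
      rw [hc] at h
      have hmono : P (Set.Ioi (b/r)) ≤ P (Set.Ioi (1 + (b - 1) * (1/r))) := by
        apply measure_mono
        apply Set.Ioi_subset_Ioi
        rw [← hc, div_le_div_iff₀ hr1 hr1]
        nlinarith
      calc P (Set.Ioi b)
          = 2⁻¹ * P (Set.Ioi (b/r)) + 2⁻¹ * P (Set.Ioi (1 + (b - 1) * (1/r))) := h
        _ ≤ 2⁻¹ * P (Set.Ioi (1 + (b - 1) * (1/r)))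
            + 2⁻¹ * P (Set.Ioi (1 + (b - 1) * (1/r))) := by gcongr
        _ = P (Set.Ioi (1 + (b - 1) * (1/r))) := halves _
    intro a ha
    have iter : ∀ n : ℕ, P (Set.Ioi a) ≤ P (Set.Ioi (1 + (a - 1) * (1/r)^n)) := by
      intro n
      induction n with
      | zero => simp
      | succ n ih =>
        refine ih.trans ?_
        have hpow : (0:ℝ) < (1/r)^n := by positivity
        have h1 : (1:ℝ) ≤ 1 + (a-1) * (1/r)^n := by nlinarith
        have h2 := step _ h1
        have h3 : 1 + ((1 + (a-1) * (1/r)^n) - 1) * (1/r) = 1 + (a-1) * (1/r)^(n+1) := by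
          ring
        rwa [h3] at h2
    have hiInter : ⋂ n : ℕ, Set.Ioi (1 + (a - 1) * (1/r)^n) = (∅ : Set ℝ) := by
      ext x
      simp only [Set.mem_iInter, Set.mem_Ioi, Set.mem_empty_iff_false, iff_false,
        not_forall, not_lt]
      obtain ⟨n, hn⟩ := pow_unbounded_of_one_lt ((x - 1)/(a-1)) hone_lt
      refine ⟨n, ?_⟩
      rw [div_lt_iff₀ (by linarith : (0:ℝ) < a - 1)] at hn
      nlinarith
    have hmeaseq : P (⋂ n : ℕ, Set.Ioi (1 + (a - 1) * (1/r)^n))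
        = ⨅ n, P (Set.Ioi (1 + (a - 1) * (1/r)^n)) := by
      refine Antitone.measure_iInter ?_ (fun i => measurableSet_Ioi.nullMeasurableSet)
        ⟨0, measure_ne_top P _⟩
      intro i j hij
      apply Set.Ioi_subset_Ioi
      have hp : (1/r)^i ≤ (1/r)^j := pow_le_pow_right₀ hone_lt.le hij
      nlinarith
    have hle : P (Set.Ioi a) ≤ ⨅ n, P (Set.Ioi (1 + (a - 1) * (1/r)^n)) := le_iInf iter
    rw [← hmeaseq, hiInter, measure_empty] at hle
    exact le_zero_iff.mp hle
  -- left tail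
  have hltail : ∀ a : ℝ, a < 0 → P (Set.Iio a) = 0 := by
    have step : ∀ b : ℝ, b ≤ 0 → P (Set.Iio b) ≤ P (Set.Iio (b * (1/r))) := by
      intro b hb
      have h := hset (Set.Iio b) measurableSet_Iio
      rw [hpre0i b, hpre1i b] at h
      have hc : b / r = b * (1/r) := by ring
      rw [hc] at h
      have hmono : P (Set.Iio ((b - (1 - r))/r)) ≤ P (Set.Iio (b * (1/r))) := by
        apply measure_mono
        apply Set.Iio_subset_Iio
        rw [← hc, div_le_div_iff₀ hr1 hr1]
        nlinarith
      calc P (Set.Iio b)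
          = 2⁻¹ * P (Set.Iio (b * (1/r))) + 2⁻¹ * P (Set.Iio ((b - (1 - r))/r)) := h
        _ ≤ 2⁻¹ * P (Set.Iio (b * (1/r))) + 2⁻¹ * P (Set.Iio (b * (1/r))) := by gcongr
        _ = P (Set.Iio (b * (1/r))) := halves _
    intro a ha
    have iter : ∀ n : ℕ, P (Set.Iio a) ≤ P (Set.Iio (a * (1/r)^n)) := by
      intro n
      induction n with
      | zero => simp
      | succ n ih =>
        refine ih.trans ?_
        have hpow : (0:ℝ) < (1/r)^n := by positivity
        have h1 : a * (1/r)^n ≤ 0 := by nlinarith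
        have h2 := step _ h1
        have h3 : a * (1/r)^n * (1/r) = a * (1/r)^(n+1) := by ring
        rwa [h3] at h2
    have hiInter : ⋂ n : ℕ, Set.Iio (a * (1/r)^n) = (∅ : Set ℝ) := by
      ext x
      simp only [Set.mem_iInter, Set.mem_Iio, Set.mem_empty_iff_false, iff_false,
        not_forall, not_lt]
      obtain ⟨n, hn⟩ := pow_unbounded_of_one_lt (x / a) hone_lt
      refine ⟨n, ?_⟩
      rw [div_lt_iff_of_neg ha] at hn
      nlinarith [mul_comm (((1:ℝ)/r)^n) a]
    have hmeaseq : P (⋂ n : ℕ, Set.Iio (a * (1/r)^n))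
        = ⨅ n, P (Set.Iio (a * (1/r)^n)) := by
      refine Antitone.measure_iInter ?_ (fun i => measurableSet_Iio.nullMeasurableSet)
        ⟨0, measure_ne_top P _⟩
      intro i j hij
      apply Set.Iio_subset_Iio
      have hp : (1/r)^i ≤ (1/r)^j := pow_le_pow_right₀ hone_lt.le hij
      nlinarith
    have hle : P (Set.Iio a) ≤ ⨅ n, P (Set.Iio (a * (1/r)^n)) := le_iInf iter
    rw [← hmeaseq, hiInter, measure_empty] at hle
    exact le_zero_iff.mp hle
  have hIoi1 : P (Set.Ioi 1) = 0 := by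
    have h := hset (Set.Ioi 1) measurableSet_Ioi
    rw [hpre0I 1, hpre1I 1] at h
    have e1 : ((1:ℝ) - (1 - r))/r = 1 := by rw [sub_sub_cancel, div_self hrne]
    rw [e1, htail (1/r) hone_lt, mul_zero, zero_add] at h
    by_contra hne
    have hlt : P (Set.Ioi 1) / 2 < P (Set.Ioi 1) :=
      ENNReal.half_lt_self hne (measure_ne_top P _)
    rw [ENNReal.div_eq_inv_mul, ← h] at hlt
    exact lt_irrefl _ hlt
  have hIio0 : P (Set.Iio 0) = 0 := by
    have h := hset (Set.Iio 0) measurableSet_Iio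
    rw [hpre0i 0, hpre1i 0] at h
    have e0 : (0:ℝ)/r = 0 := by simp
    have e1 : ((0:ℝ) - (1 - r))/r < 0 := by
      apply div_neg_of_neg_of_pos _ hr1; linarith
    rw [e0, hltail _ e1, mul_zero, add_zero] at h
    by_contra hne
    have hlt : P (Set.Iio 0) / 2 < P (Set.Iio 0) :=
      ENNReal.half_lt_self hne (measure_ne_top P _)
    rw [ENNReal.div_eq_inv_mul, ← h] at hlt
    exact lt_irrefl _ hlt
  have hsupp : ∀ᵐ x ∂P, x ∈ Set.Icc (0:ℝ) 1 := by
    rw [ae_iff]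
    have hcompl : {x : ℝ | ¬ x ∈ Set.Icc (0:ℝ) 1} = Set.Iio 0 ∪ Set.Ioi 1 := by
      ext x
      simp only [Set.mem_setOf_eq, Set.mem_Icc, Set.mem_union, Set.mem_Iio, Set.mem_Ioi,
        not_and_or, not_le]
    rw [hcompl]
    exact measure_union_null hIio0 hIoi1
  -- integrability of continuous functions
  have hint : ∀ f : ℝ → ℝ, Continuous f → Integrable f P := by
    intro f hf
    obtain ⟨C, hC⟩ := (isCompact_Icc (a := (0:ℝ)) (b := 1)).exists_bound_of_continuousOn
      hf.continuousOn
    exact (integrable_const C).mono' hf.aestronglyMeasurable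
      (hsupp.mono fun x hx => hC x hx)
  -- integral functional equation
  have hB : ∀ f : ℝ → ℝ, Continuous f →
      ∫ x, f x ∂P = (2⁻¹ : ℝ) * ∫ x, f (r * x) ∂P
        + (2⁻¹ : ℝ) * ∫ x, f (r * x + (1 - r)) ∂P := by
    intro f hf
    have hi0 : Integrable (fun x => f (r * x)) P :=
      hint _ (hf.comp (continuous_const.mul continuous_id))
    have hi1 : Integrable (fun x => f (r * x + (1 - r))) P :=
      hint _ (hf.comp ((continuous_const.mul continuous_id).add continuous_const))
    have hmap0 : Integrable f (P.map (Smap r 0)) := by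
      rw [integrable_map_measure hf.aestronglyMeasurable hm0.aemeasurable]
      simpa [hS0, Function.comp_def] using hi0
    have hmap1 : Integrable f (P.map (Smap r 1)) := by
      rw [integrable_map_measure hf.aestronglyMeasurable hm1.aemeasurable]
      simpa [hS1, Function.comp_def] using hi1
    conv_lhs => rw [hP]
    rw [integral_add_measure (hmap0.smul_measure (by norm_num))
        (hmap1.smul_measure (by norm_num)),
      integral_smul_measure, integral_smul_measure,
      integral_map hm0.aemeasurable hf.aestronglyMeasurable,
      integral_map hm1.aemeasurable hf.aestronglyMeasurable, hS0, hS1]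
    norm_num
  set m := ∫ x, x ∂P with hmdef
  set s := ∫ x, x^2 ∂P with hsdef
  have hintx : Integrable (fun x : ℝ => x) P := hint _ continuous_id
  have hintx2 : Integrable (fun x : ℝ => x^2) P := hint _ (continuous_pow 2)
  have h1mr : (1:ℝ) - r ≠ 0 := by linarith
  have h1pr : (1:ℝ) + r ≠ 0 := by linarith
  have hm : m = 1/2 := by
    have h := hB (fun x => x) continuous_id
    have h2 : ∫ x, (r * x + (1 - r)) ∂P = r * m + (1 - r) := by
      have i1 : Integrable (fun x : ℝ => r * x) P := hint _ (by fun_prop)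
      rw [integral_add i1 (integrable_const _), integral_const_mul, integral_const]
      simp [hmdef]
    rw [h2, integral_const_mul] at h
    have key : (1 - r) * m = (1 - r) * (1/2) := by linarith
    exact mul_left_cancel₀ h1mr key
  have hs : s = 1 / (2 * (1 + r)) := by
    have h := hB (fun x => x^2) (continuous_pow 2)
    have e0 : ∫ x, (r * x)^2 ∂P = r^2 * s := by
      simp only [mul_pow]; rw [integral_const_mul]
    have e1 : ∫ x, (r * x + (1 - r))^2 ∂P = r^2 * s + (2*r*(1-r) * m + (1-r)^2) := by
      have hfe : (fun x : ℝ => (r * x + (1 - r))^2)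
          = fun x => r^2 * x^2 + (2*r*(1-r) * x + (1-r)^2) := by funext x; ring
      have i1 : Integrable (fun x : ℝ => r^2 * x^2) P := hint _ (by fun_prop)
      have i2 : Integrable (fun x : ℝ => 2*r*(1-r) * x + (1-r)^2) P := hint _ (by fun_prop)
      have i3 : Integrable (fun x : ℝ => 2*r*(1-r) * x) P := hint _ (by fun_prop)
      rw [hfe, integral_add i1 i2, integral_add i3 (integrable_const _), integral_const_mul,
        integral_const_mul, integral_const]
      simp [hmdef, hsdef]
    rw [e0, e1, hm] at h
    have key : (1 - r) * ((1 + r) * s) = (1 - r) * ((1 + r) * (1 / (2 * (1 + r)))) := by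
      field_simp
      nlinarith [h]
    exact mul_left_cancel₀ h1pr (mul_left_cancel₀ h1mr key)
  -- main computation
  have hf : Continuous (fun x : ℝ => min ((x - r/2)^2) ((x - (1 - r/2))^2)) :=
    ((continuous_id.sub continuous_const).pow 2).min
      ((continuous_id.sub continuous_const).pow 2)
  have h := hB _ hf
  have e0 : ∫ x, min ((r*x - r/2)^2) ((r*x - (1 - r/2))^2) ∂P
      = ∫ x, (r*x - r/2)^2 ∂P := by
    refine integral_congr_ae (hsupp.mono fun x hx => ?_)
    have hx1 : (0:ℝ) ≤ x := hx.1
    have hx2 : x ≤ 1 := hx.2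
    have hrx : r * x ≤ r := by nlinarith
    apply min_eq_left
    have key : (r*x - (1 - r/2))^2 - (r*x - r/2)^2 = (1 - 2*(r*x))*(1-r) := by ring
    linarith [mul_nonneg (show (0:ℝ) ≤ 1 - 2*(r*x) by linarith)
      (show (0:ℝ) ≤ 1 - r by linarith), key]
  have e1 : ∫ x, min ((r*x + (1-r) - r/2)^2) ((r*x + (1-r) - (1 - r/2))^2) ∂P
      = ∫ x, (r*x - r/2)^2 ∂P := by
    refine integral_congr_ae (hsupp.mono fun x hx => ?_)
    have hx1 : (0:ℝ) ≤ x := hx.1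
    have hx2 : x ≤ 1 := hx.2
    have hrx : 0 ≤ r * x := by positivity
    have key : (r*x + (1-r) - r/2)^2 - (r*x + (1-r) - (1 - r/2))^2
        = (2*(r*x) + 1 - 2*r)*(1-r) := by ring
    have hle : (r*x + (1-r) - (1 - r/2))^2 ≤ (r*x + (1-r) - r/2)^2 := by
      linarith [mul_nonneg (show (0:ℝ) ≤ 2*(r*x) + 1 - 2*r by linarith)
        (show (0:ℝ) ≤ 1 - r by linarith), key]
    exact (min_eq_right hle).trans (by ring)
  have hJ : ∫ x, (r*x - r/2)^2 ∂P = r^2 * s - r^2 * m + r^2/4 := by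
    have hfe : (fun x : ℝ => (r*x - r/2)^2)
        = fun x => r^2 * x^2 + ((-(r^2)) * x + r^2/4) := by funext x; ring
    have i1 : Integrable (fun x : ℝ => r^2 * x^2) P := hint _ (by fun_prop)
    have i2 : Integrable (fun x : ℝ => (-(r^2)) * x + r^2/4) P := hint _ (by fun_prop)
    have i3 : Integrable (fun x : ℝ => (-(r^2)) * x) P := hint _ (by fun_prop)
    rw [hfe, integral_add i1 i2, integral_add i3 (integrable_const _), integral_const_mul,
      integral_const_mul, integral_const]
    simp
    ring
  rw [e0, e1, hJ, hm, hs] at h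
  rw [h]
  field_simp
  ring
end

section
/- Let $P$ be the uniform Cantor distribution with contraction ratio $r=1/3$. Define $V_n=\inf\{\int\min_{a\in\alpha}(x-a)^2\,dP(x):\alpha\subset\mathbb{R},\ \mathrm{card}(\alpha)\le n\}$. Then $V_2=\frac{1}{72}$, achieved by the set $\{1/6,\,5/6\}$. -/
open MeasureTheory Set
open scoped ENNReal

set_option linter.unusedSectionVars false

lemma Smap0 : Smap (1/3) 0 = fun x : ℝ => x/3 := by
  funext x; simp [Smap]; ring

lemma Smap1 : Smap (1/3) 1 = fun x : ℝ => x/3 + 2/3 := by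
  funext x; simp [Smap]; norm_num; ring

lemma contS0 : Continuous (Smap (1/3) 0) := by rw [Smap0]; continuity

lemma contS1 : Continuous (Smap (1/3) 1) := by rw [Smap1]; continuity

lemma pre_Ioi (c : ℝ) : (fun x : ℝ => x/3) ⁻¹' Ioi c = Ioi (3*c) := by
  ext x; simp only [mem_preimage, mem_Ioi]; constructor <;> intro h <;> linarith

lemma pre_Ioi' (c : ℝ) : (fun x : ℝ => x/3 + 2/3) ⁻¹' Ioi c = Ioi (3*c - 2) := by
  ext x; simp only [mem_preimage, mem_Ioi]; constructor <;> intro h <;> linarith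

lemma pre_Iio (c : ℝ) : (fun x : ℝ => x/3) ⁻¹' Iio c = Iio (3*c) := by
  ext x; simp only [mem_preimage, mem_Iio]; constructor <;> intro h <;> linarith

lemma pre_Iio' (c : ℝ) : (fun x : ℝ => x/3 + 2/3) ⁻¹' Iio c = Iio (3*c - 2) := by
  ext x; simp only [mem_preimage, mem_Iio]; constructor <;> intro h <;> linarith

lemma enn_helper (a b e : ℝ≥0∞) (ha : a ≠ ∞) (hb : b ≠ ∞) (he : e ≠ ∞)
    (heq : a = 2⁻¹ * b + 2⁻¹ * e) (hea : e ≤ a) (hba : b ≤ a) : a = b := by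
  have haR : a.toReal = 2⁻¹ * b.toReal + 2⁻¹ * e.toReal := by
    rw [heq, ENNReal.toReal_add, ENNReal.toReal_mul, ENNReal.toReal_mul]
    · norm_num
    · exact ENNReal.mul_ne_top (by norm_num) hb
    · exact ENNReal.mul_ne_top (by norm_num) he
  have h1 : e.toReal ≤ a.toReal := ENNReal.toReal_mono ha hea
  have h2 : b.toReal ≤ a.toReal := ENNReal.toReal_mono ha hba
  have : a.toReal = b.toReal := by linarith
  exact (ENNReal.toReal_eq_toReal_iff' ha hb).mp this

section Main

variable (P : Measure ℝ) [IsProbabilityMeasure P]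
  (hP : P = (2 : ℝ≥0∞)⁻¹ • P.map (Smap (1/3) 0) + (2 : ℝ≥0∞)⁻¹ • P.map (Smap (1/3) 1))
include hP

lemma measure_rec (s : Set ℝ) (hs : MeasurableSet s) :
    P s = 2⁻¹ * P ((fun x : ℝ => x/3) ⁻¹' s) + 2⁻¹ * P ((fun x : ℝ => x/3 + 2/3) ⁻¹' s) := by
  conv_lhs => rw [hP]
  rw [Measure.add_apply, Measure.smul_apply, Measure.smul_apply,
    Measure.map_apply contS0.measurable hs, Measure.map_apply contS1.measurable hs,
    Smap0, Smap1]
  rfl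

lemma P_Ioi_one : P (Ioi 1) = 0 := by
  have step : ∀ c : ℝ, 1 ≤ c → P (Ioi c) = P (Ioi (3*c)) := by
    intro c hc
    have h := measure_rec P hP (Ioi c) measurableSet_Ioi
    rw [pre_Ioi, pre_Ioi'] at h
    exact enn_helper _ _ _ (measure_ne_top _ _) (measure_ne_top _ _) (measure_ne_top _ _) h
      (measure_mono (Ioi_subset_Ioi (by linarith))) (measure_mono (Ioi_subset_Ioi (by linarith)))
  have hpow : ∀ n : ℕ, P (Ioi 1) = P (Ioi ((3:ℝ)^n)) := by
    intro n
    induction n with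
    | zero => simp
    | succ k ih =>
        rw [ih, step ((3:ℝ)^k) (one_le_pow₀ (by norm_num))]
        rw [show (3:ℝ) * 3^k = 3^(k+1) by ring]
  have hanti : Antitone (fun n : ℕ => Ioi ((3:ℝ)^n)) := by
    intro m n hmn
    exact Ioi_subset_Ioi (pow_le_pow_right₀ (by norm_num) hmn)
  have hempty : (⋂ n : ℕ, Ioi ((3:ℝ)^n)) = ∅ := by
    ext x
    simp only [mem_iInter, mem_Ioi, mem_empty_iff_false, iff_false, not_forall, not_lt]
    obtain ⟨n, hn⟩ := pow_unbounded_of_one_lt x (by norm_num : (1:ℝ) < 3)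
    exact ⟨n, hn.le⟩
  have htend := tendsto_measure_iInter_atTop (μ := P)
    (fun n => measurableSet_Ioi.nullMeasurableSet) hanti ⟨0, measure_ne_top _ _⟩
  rw [hempty] at htend
  simp only [measure_empty] at htend
  have hconst : Filter.Tendsto (fun n : ℕ => P (Ioi ((3:ℝ)^n))) Filter.atTop (nhds (P (Ioi 1))) := by
    simp only [← hpow]; exact tendsto_const_nhds
  exact tendsto_nhds_unique hconst htend

lemma P_Iio_zero : P (Iio 0) = 0 := by
  have step : ∀ c : ℝ, c ≤ 0 → P (Iio c) = P (Iio (3*c)) := by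
    intro c hc
    have h := measure_rec P hP (Iio c) measurableSet_Iio
    rw [pre_Iio, pre_Iio'] at h
    exact enn_helper _ _ _ (measure_ne_top _ _) (measure_ne_top _ _) (measure_ne_top _ _) h
      (measure_mono (Iio_subset_Iio (by linarith))) (measure_mono (Iio_subset_Iio (by linarith)))
  have h0 : P (Iio 0) = P (Iio (-2)) := by
    have h := measure_rec P hP (Iio 0) measurableSet_Iio
    rw [pre_Iio, pre_Iio'] at h
    norm_num at h
    exact enn_helper _ _ _ (measure_ne_top _ _) (measure_ne_top _ _) (measure_ne_top _ _)
      (h.trans (add_comm _ _)) le_rfl (measure_mono (Iio_subset_Iio (by norm_num)))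
  have hpow : ∀ n : ℕ, P (Iio 0) = P (Iio (-2 * 3^n)) := by
    intro n
    induction n with
    | zero => simpa using h0
    | succ k ih =>
        rw [ih, step (-2 * 3^k) (by nlinarith [pow_pos (by norm_num : (0:ℝ) < 3) k])]
        rw [show (3:ℝ) * (-2 * 3^k) = -2 * 3^(k+1) by ring]
  have hanti : Antitone (fun n : ℕ => Iio ((-2:ℝ) * 3^n)) := by
    intro m n hmn
    refine Iio_subset_Iio ?_
    have := pow_le_pow_right₀ (by norm_num : (1:ℝ) ≤ 3) hmn
    nlinarith
  have hempty : (⋂ n : ℕ, Iio ((-2:ℝ) * 3^n)) = ∅ := by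
    ext x
    simp only [mem_iInter, mem_Iio, mem_empty_iff_false, iff_false, not_forall, not_lt]
    obtain ⟨n, hn⟩ := pow_unbounded_of_one_lt (-x/2) (by norm_num : (1:ℝ) < 3)
    exact ⟨n, by nlinarith⟩
  have htend := tendsto_measure_iInter_atTop (μ := P)
    (fun n => measurableSet_Iio.nullMeasurableSet) hanti ⟨0, measure_ne_top _ _⟩
  rw [hempty] at htend
  simp only [measure_empty] at htend
  have hconst : Filter.Tendsto (fun n : ℕ => P (Iio ((-2:ℝ) * 3^n))) Filter.atTop
      (nhds (P (Iio 0))) := by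
    simp only [← hpow]; exact tendsto_const_nhds
  exact tendsto_nhds_unique hconst htend

lemma P_supp : ∀ᵐ x ∂P, x ∈ Icc (0:ℝ) 1 := by
  have : P (Icc (0:ℝ) 1)ᶜ = 0 := by
    have hsub : (Icc (0:ℝ) 1)ᶜ ⊆ Iio 0 ∪ Ioi 1 := by
      intro x hx
      simp only [mem_compl_iff, mem_Icc, not_and_or, not_le] at hx
      rcases hx with h | h
      · exact Or.inl h
      · exact Or.inr h
    refine le_antisymm ?_ (zero_le)
    calc P (Icc (0:ℝ) 1)ᶜ ≤ P (Iio 0 ∪ Ioi 1) := measure_mono hsub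
      _ ≤ P (Iio 0) + P (Ioi 1) := measure_union_le _ _
      _ = 0 := by rw [P_Iio_zero P hP, P_Ioi_one P hP]; simp
  exact ae_iff.mpr this

end Main
section Integ

variable (P : Measure ℝ) [IsProbabilityMeasure P]
  (hP : P = (2 : ℝ≥0∞)⁻¹ • P.map (Smap (1/3) 0) + (2 : ℝ≥0∞)⁻¹ • P.map (Smap (1/3) 1))
include hP

lemma integ_cont (f : ℝ → ℝ) (hf : Continuous f) : Integrable f P := by
  obtain ⟨C, hC⟩ := (isCompact_Icc (a := (0:ℝ)) (b := 1)).exists_bound_of_continuousOn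
    hf.continuousOn
  refine (integrable_const C).mono' hf.aestronglyMeasurable ?_
  filter_upwards [P_supp P hP] with x hx
  exact hC x hx

lemma transfer (f : ℝ → ℝ) (hf : Continuous f) :
    ∫ x, f x ∂P = (∫ x, f (x/3) ∂P)/2 + (∫ x, f (x/3 + 2/3) ∂P)/2 := by
  have hint0 : Integrable f (P.map (Smap (1/3) 0)) := by
    rw [integrable_map_measure hf.aestronglyMeasurable contS0.measurable.aemeasurable]
    exact integ_cont P hP _ (hf.comp contS0)
  have hint1 : Integrable f (P.map (Smap (1/3) 1)) := by
    rw [integrable_map_measure hf.aestronglyMeasurable contS1.measurable.aemeasurable]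
    exact integ_cont P hP _ (hf.comp contS1)
  have m0 : ∫ x, f x ∂(P.map (Smap (1/3) 0)) = ∫ x, f (x/3) ∂P := by
    rw [integral_map contS0.measurable.aemeasurable hf.aestronglyMeasurable]
    simp only [Smap0]
  have m1 : ∫ x, f x ∂(P.map (Smap (1/3) 1)) = ∫ x, f (x/3 + 2/3) ∂P := by
    rw [integral_map contS1.measurable.aemeasurable hf.aestronglyMeasurable]
    simp only [Smap1]
  conv_lhs => rw [hP]
  rw [integral_add_measure (hint0.smul_measure (by norm_num)) (hint1.smul_measure (by norm_num)),
    integral_smul_measure, integral_smul_measure, m0, m1]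
  norm_num
  ring

lemma int_id : ∫ x, x ∂P = 1/2 := by
  have h := transfer P hP (fun x => x) continuous_id
  have h1 : ∫ x, x/3 ∂P = (∫ x, x ∂P)/3 := integral_div 3 _
  have h2 : ∫ x, (x/3 + 2/3) ∂P = (∫ x, x ∂P)/3 + 2/3 := by
    rw [integral_add (integ_cont P hP (fun x => x/3) (by fun_prop)) (integrable_const _),
      integral_div, integral_const]
    simp
  rw [h1, h2] at h
  linarith

lemma int_sq : ∫ x, x^2 ∂P = 3/8 := by
  have h := transfer P hP (fun x => x^2) (by fun_prop)
  have e1 : ∫ x, (x/3)^2 ∂P = (∫ x, x^2 ∂P)/9 := by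
    rw [← integral_div]
    congr 1; funext x; ring
  have e2 : ∫ x, (x/3 + 2/3)^2 ∂P = (∫ x, x^2 ∂P)/9 + (4/9)*(∫ x, x ∂P) + 4/9 := by
    have he : (fun x : ℝ => (x/3 + 2/3)^2) = fun x => (x^2/9 + ((4/9)*x + 4/9)) := by
      funext x; ring
    rw [he, integral_add (integ_cont P hP (fun x => x^2/9) (by fun_prop))
        (integ_cont P hP (fun x => (4/9)*x + 4/9) (by fun_prop)),
      integral_add (integ_cont P hP (fun x => (4/9)*x) (by fun_prop)) (integrable_const _),
      integral_div, integral_const_mul, integral_const]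
    simp; ring
  rw [e1, e2, int_id P hP] at h
  linarith

end Integ
noncomputable def Af (P : Measure ℝ) (t : ℝ) : ℝ := ∫ x, max (t - x) 0 ∂P
noncomputable def Bf (P : Measure ℝ) (t : ℝ) : ℝ := ∫ x, max (x - t) 0 ∂P

lemma third_max (u : ℝ) : max ((1/3)*u) 0 = (1/3) * max u 0 := by
  rw [mul_max_of_nonneg _ _ (by norm_num : (0:ℝ) ≤ 1/3)]; norm_num

lemma Af_def (P : Measure ℝ) (t : ℝ) : Af P t = ∫ x, max (t - x) 0 ∂P := rfl

section AB

variable (P : Measure ℝ) [IsProbabilityMeasure P]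
  (hP : P = (2 : ℝ≥0∞)⁻¹ • P.map (Smap (1/3) 0) + (2 : ℝ≥0∞)⁻¹ • P.map (Smap (1/3) 1))
include hP

lemma Af_nonneg (t : ℝ) : 0 ≤ Af P t :=
  integral_nonneg fun x => le_max_right _ _

lemma Bf_nonneg (t : ℝ) : 0 ≤ Bf P t :=
  integral_nonneg fun x => le_max_right _ _

lemma Af_zero {t : ℝ} (ht : t ≤ 0) : Af P t = 0 := by
  refine integral_eq_zero_of_ae ?_
  filter_upwards [P_supp P hP] with x hx
  have : t - x ≤ 0 := by have := hx.1; linarith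
  simp [max_eq_right this]

lemma Af_one {t : ℝ} (ht : 1 ≤ t) : Af P t = t - 1/2 := by
  have : Af P t = ∫ x, (t - x) ∂P := by
    refine integral_congr_ae ?_
    filter_upwards [P_supp P hP] with x hx
    have : 0 ≤ t - x := by have := hx.2; linarith
    simp [max_eq_left this]
  rw [this, integral_sub (integrable_const _) (integ_cont P hP (fun x => x) continuous_id),
    integral_const, int_id P hP]
  simp

lemma Af_mono {s t : ℝ} (hst : s ≤ t) : Af P s ≤ Af P t := by
  refine integral_mono (integ_cont P hP _ (by fun_prop)) (integ_cont P hP _ (by fun_prop)) ?_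
  intro x
  exact max_le_max (by linarith) le_rfl

lemma Af_rec (t : ℝ) : Af P t = Af P (3*t)/6 + Af P (3*t-2)/6 := by
  have h := transfer P hP (fun x => max (t - x) 0) (by fun_prop)
  have e1 : ∫ x, max (t - x/3) 0 ∂P = (1/3) * Af P (3*t) := by
    unfold Af
    rw [← integral_const_mul]
    congr 1; funext x
    rw [show t - x/3 = (1/3)*(3*t-x) by ring, third_max]
  have e2 : ∫ x, max (t - (x/3 + 2/3)) 0 ∂P = (1/3) * Af P (3*t-2) := by
    unfold Af
    rw [← integral_const_mul]
    congr 1; funext x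
    rw [show t - (x/3 + 2/3) = (1/3)*((3*t-2)-x) by ring, third_max]
  rw [e1, e2] at h
  rw [Af_def, h]; ring

lemma Bf_eq (t : ℝ) : Bf P t = Af P t + 1/2 - t := by
  have hpt : ∀ x : ℝ, max (x - t) 0 = max (t - x) 0 + (x - t) := by
    intro x
    rcases le_total x t with h | h
    · rw [max_eq_right (by linarith), max_eq_left (by linarith)]; ring
    · rw [max_eq_left (by linarith), max_eq_right (by linarith)]; ring
  have : Bf P t = ∫ x, (max (t - x) 0 + (x - t)) ∂P := by
    unfold Bf; congr 1; funext x; exact hpt x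
  rw [this, integral_add (integ_cont P hP _ (by fun_prop)) (integ_cont P hP _ (by fun_prop)),
    integral_sub (integ_cont P hP (fun x => x) continuous_id) (integrable_const _),
    integral_const, int_id P hP]
  unfold Af
  simp
  ring

end AB
section Key

variable (P : Measure ℝ) [IsProbabilityMeasure P]
  (hP : P = (2 : ℝ≥0∞)⁻¹ • P.map (Smap (1/3) 0) + (2 : ℝ≥0∞)⁻¹ • P.map (Smap (1/3) 1))
include hP

lemma Af_le_half {t : ℝ} (ht : t ≤ 1) : Af P t ≤ 1/2 := by
  have h := Af_mono P hP ht
  rw [Af_one P hP le_rfl] at h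
  linarith

lemma Af_key : ∀ t ∈ Icc (0:ℝ) 1, Af P t ≤ t/2 := by
  have hbdd : BddAbove ((fun t => Af P t - t/2) '' Icc 0 1) := by
    refine ⟨1/2, ?_⟩
    rintro y ⟨t, ht, rfl⟩
    have := Af_le_half P hP ht.2
    have := ht.1
    simp only []
    linarith
  have hne : ((fun t => Af P t - t/2) '' Icc 0 1).Nonempty :=
    ⟨_, ⟨0, by norm_num, rfl⟩⟩
  set K := sSup ((fun t => Af P t - t/2) '' Icc 0 1) with hK
  have hKle : ∀ t ∈ Icc (0:ℝ) 1, Af P t - t/2 ≤ K := fun t ht => le_csSup hbdd ⟨t, ht, rfl⟩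
  have main : ∀ t ∈ Icc (0:ℝ) 1, Af P t - t/2 ≤ max K 0 / 6 := by
    intro t ht
    obtain ⟨ht0, ht1⟩ := ht
    have hrec := Af_rec P hP t
    rcases le_or_gt t (1/3) with h1 | h1
    · have hz : Af P (3*t-2) = 0 := Af_zero P hP (by linarith)
      have hk := hKle (3*t) ⟨by linarith, by linarith⟩
      have := le_max_left K 0
      rw [hrec, hz]
      linarith
    rcases le_or_gt t (2/3) with h2 | h2
    · have hz : Af P (3*t-2) = 0 := Af_zero P hP (by linarith)
      have ho : Af P (3*t) = 3*t - 1/2 := Af_one P hP (by linarith)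
      have := le_max_right K 0
      rw [hrec, hz, ho]
      linarith
    · have ho : Af P (3*t) = 3*t - 1/2 := Af_one P hP (by linarith)
      have hk := hKle (3*t-2) ⟨by linarith, by linarith⟩
      have := le_max_left K 0
      rw [hrec, ho]
      linarith
  have hK6 : K ≤ max K 0 / 6 := by
    refine csSup_le hne ?_
    rintro y ⟨t, ht, rfl⟩
    exact main t ht
  have hK0 : K ≤ 0 := by
    rcases le_or_gt K 0 with h | h
    · exact h
    · rw [max_eq_left h.le] at hK6; linarith
  intro t ht
  have := hKle t ht
  linarith

lemma AB_le (m : ℝ) : Af P m * Bf P m ≤ 1/36 := by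
  have hA0 := Af_nonneg P hP m
  have hB0 := Bf_nonneg P hP m
  rcases lt_or_ge m 0 with h | h
  · rw [Af_zero P hP h.le]; linarith
  rcases lt_or_ge (1:ℝ) m with h1 | h1
  · rw [Bf_eq P hP, Af_one P hP h1.le]
    nlinarith
  rw [Bf_eq P hP]
  have hrec := Af_rec P hP m
  rcases le_or_gt m (1/3) with h2 | h2
  · have hz : Af P (3*m-2) = 0 := Af_zero P hP (by linarith)
    have ha0 : 0 ≤ Af P (3*m) := Af_nonneg P hP _
    have ha : Af P (3*m) ≤ (3*m)/2 := Af_key P hP (3*m) ⟨by linarith, by linarith⟩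
    rw [hrec, hz]
    nlinarith [mul_nonneg ha0 (sub_nonneg.mpr ha), sq_nonneg (Af P (3*m) - 3*m/2),
      mul_nonneg (mul_nonneg ha0 ha0) h, mul_nonneg ha0 h]
  rcases le_or_gt m (2/3) with h3 | h3
  · have hz : Af P (3*m-2) = 0 := Af_zero P hP (by linarith)
    have ho : Af P (3*m) = 3*m - 1/2 := Af_one P hP (by linarith)
    rw [hrec, hz, ho]
    nlinarith [sq_nonneg (m - 1/2)]
  · have ho : Af P (3*m) = 3*m - 1/2 := Af_one P hP (by linarith)
    have ha0 : 0 ≤ Af P (3*m-2) := Af_nonneg P hP _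
    have ha : Af P (3*m-2) ≤ (3*m-2)/2 := Af_key P hP (3*m-2) ⟨by linarith, by linarith⟩
    rw [hrec, ho]
    nlinarith [mul_nonneg ha0 (sub_nonneg.mpr ha), sq_nonneg (Af P (3*m-2) - (3*m-2)/2),
      mul_nonneg ha0 (sub_nonneg.mpr h1)]

end Key
section FF

variable (P : Measure ℝ) [IsProbabilityMeasure P]
  (hP : P = (2 : ℝ≥0∞)⁻¹ • P.map (Smap (1/3) 0) + (2 : ℝ≥0∞)⁻¹ • P.map (Smap (1/3) 1))
include hP

lemma int_quad (c : ℝ) : ∫ x, (x - c)^2 ∂P = 3/8 - c + c^2 := by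
  have he : (fun x : ℝ => (x - c)^2) = fun x => (x^2 - (2*c)*x) + c^2 :=
    funext fun x => by ring
  rw [he, integral_add (integ_cont P hP (fun x => x^2 - (2*c)*x) (by fun_prop)) (integrable_const _),
    integral_sub (integ_cont P hP (fun x => x^2) (by fun_prop))
      (integ_cont P hP (fun x => (2*c)*x) (by fun_prop)),
    integral_const_mul, int_sq P hP, int_id P hP, integral_const]
  simp
  ring

lemma F_formula (a b : ℝ) (hab : a ≤ b) :
    ∫ x, min ((x - a)^2) ((x - b)^2) ∂P
      = 3/8 - (a+b)/2 + (a^2+b^2)/2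
        - (b-a)*(Af P ((a+b)/2) + Bf P ((a+b)/2)) := by
  have hpt : ∀ x : ℝ, min ((x - a)^2) ((x - b)^2)
      = (x^2 - (a+b)*x + (a^2+b^2)/2)
        - (b-a)*(max (x - (a+b)/2) 0 + max ((a+b)/2 - x) 0) := by
    intro x
    rcases le_total x ((a+b)/2) with h | h
    · rw [min_eq_left (by nlinarith), max_eq_right (by linarith), max_eq_left (by linarith)]
      ring
    · rw [min_eq_right (by nlinarith), max_eq_left (by linarith), max_eq_right (by linarith)]
      ring
  have he : (fun x => min ((x - a)^2) ((x - b)^2))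
      = fun x => (x^2 - (a+b)*x + (a^2+b^2)/2)
        - (b-a)*(max (x - (a+b)/2) 0 + max ((a+b)/2 - x) 0) := funext hpt
  rw [he, integral_sub (integ_cont P hP (fun x => x^2 - (a+b)*x + (a^2+b^2)/2) (by fun_prop))
      (integ_cont P hP (fun x => (b-a)*(max (x - (a+b)/2) 0 + max ((a+b)/2 - x) 0)) (by fun_prop)),
    integral_const_mul,
    integral_add (integ_cont P hP (fun x => max (x - (a+b)/2) 0) (by fun_prop))
      (integ_cont P hP (fun x => max ((a+b)/2 - x) 0) (by fun_prop)),
    integral_add (integ_cont P hP (fun x => x^2 - (a+b)*x) (by fun_prop)) (integrable_const _),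
    integral_sub (integ_cont P hP (fun x => x^2) (by fun_prop))
      (integ_cont P hP (fun x => (a+b)*x) (by fun_prop)),
    integral_const_mul, int_sq P hP, int_id P hP, integral_const]
  have hA : ∫ x, max ((a+b)/2 - x) 0 ∂P = Af P ((a+b)/2) := rfl
  have hB : ∫ x, max (x - (a+b)/2) 0 ∂P = Bf P ((a+b)/2) := rfl
  rw [hA, hB]
  simp
  ring

lemma F_lower (a b : ℝ) (hab : a ≤ b) :
    1/72 ≤ ∫ x, min ((x - a)^2) ((x - b)^2) ∂P := by
  rw [F_formula P hP a b hab]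
  have hAB := AB_le P hP ((a+b)/2)
  have hBA := Bf_eq P hP ((a+b)/2)
  have hA0 := Af_nonneg P hP ((a+b)/2)
  have hB0 := Bf_nonneg P hP ((a+b)/2)
  set A := Af P ((a+b)/2)
  set B := Bf P ((a+b)/2)
  nlinarith [sq_nonneg ((b-a)/2 - (A+B)), sq_nonneg (A-B), hAB, hBA]

lemma Af_half : Af P (1/2) = 1/6 := by
  have h := Af_rec P hP (1/2)
  norm_num at h
  rw [h, Af_one P hP (by norm_num), Af_zero P hP (by norm_num)]
  norm_num

lemma part2 : ∫ x, min ((x - 1/6)^2) ((x - 5/6)^2) ∂P = 1/72 := by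
  rw [F_formula P hP (1/6) (5/6) (by norm_num),
    show ((1:ℝ)/6 + 5/6)/2 = 1/2 by norm_num, Af_half P hP, Bf_eq P hP, Af_half P hP]
  norm_num

end FF
theorem stmt10 (P : Measure ℝ) [IsProbabilityMeasure P]
    (hP : P = (2 : ℝ≥0∞)⁻¹ • P.map (Smap (1/3) 0) + (2 : ℝ≥0∞)⁻¹ • P.map (Smap (1/3) 1)) :
    sInf {e : ℝ | ∃ α : Finset ℝ, α.Nonempty ∧ α.card ≤ 2 ∧
        e = ∫ x, sInf ((fun a => (x - a)^2) '' (α : Set ℝ)) ∂P} = 1/72 ∧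
    ∫ x, min ((x - 1/6)^2) ((x - 5/6)^2) ∂P = 1/72 := by
  have hpart2 := part2 P hP
  refine ⟨?_, hpart2⟩
  have hmem : (1/72 : ℝ) ∈ {e : ℝ | ∃ α : Finset ℝ, α.Nonempty ∧ α.card ≤ 2 ∧
      e = ∫ x, sInf ((fun a => (x - a)^2) '' (α : Set ℝ)) ∂P} := by
    refine ⟨({1/6, 5/6} : Finset ℝ), ⟨1/6, by norm_num⟩,
      le_trans (Finset.card_insert_le _ _) (by norm_num), ?_⟩
    have he : (fun x : ℝ => sInf ((fun a => (x - a)^2) '' (({1/6, 5/6} : Finset ℝ) : Set ℝ)))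
        = fun x : ℝ => min ((x - 1/6)^2) ((x - 5/6)^2) := by
      funext x
      rw [Finset.coe_insert, Finset.coe_singleton, Set.image_insert_eq, Set.image_singleton,
        csInf_pair]
    rw [he, hpart2]
  have hlb : ∀ e ∈ {e : ℝ | ∃ α : Finset ℝ, α.Nonempty ∧ α.card ≤ 2 ∧
      e = ∫ x, sInf ((fun a => (x - a)^2) '' (α : Set ℝ)) ∂P}, 1/72 ≤ e := by
    rintro e ⟨α, hne, hcard, rfl⟩
    have hpos : 1 ≤ α.card := Finset.card_pos.mpr hne
    interval_cases h : α.card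
    · obtain ⟨a, rfl⟩ := Finset.card_eq_one.mp h
      have he : (fun x : ℝ => sInf ((fun c => (x - c)^2) '' (({a} : Finset ℝ) : Set ℝ)))
          = fun x : ℝ => (x - a)^2 := by
        funext x
        rw [Finset.coe_singleton, Set.image_singleton, csInf_singleton]
      rw [he, int_quad P hP]
      nlinarith [sq_nonneg (a - 1/2)]
    · obtain ⟨a, b, hab, rfl⟩ := Finset.card_eq_two.mp h
      have he : (fun x : ℝ => sInf ((fun c => (x - c)^2) '' (({a, b} : Finset ℝ) : Set ℝ)))
          = fun x : ℝ => min ((x - min a b)^2) ((x - max a b)^2) := by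
        funext x
        rw [Finset.coe_insert, Finset.coe_singleton, Set.image_insert_eq, Set.image_singleton,
          csInf_pair]
        rcases le_total a b with hle | hle
        · rw [min_eq_left hle, max_eq_right hle]
        · rw [min_eq_right hle, max_eq_left hle, min_comm]
      rw [he]
      exact F_lower P hP _ _ (min_le_max)
  exact le_antisymm (csInf_le ⟨1/72, fun e he => hlb e he⟩ hmem) (le_csInf ⟨_, hmem⟩ hlb)
end

section
/- There is a unique real number $r_0\in(0,\tfrac12)$ satisfying $(r-1)(r^4+r^2)=\frac{r^7+r^6+4r^5-2r^4-2r^3-8r^2+9r-3}{6}$, and $0.435<r_0<0.4351$. -/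
noncomputable def Pfun : ℝ → ℝ :=
  fun r => r^7 + r^6 - 2*r^5 + 4*r^4 - 8*r^3 - 2*r^2 + 9*r - 3

lemma Pfun_hasDeriv (r : ℝ) :
    HasDerivAt Pfun (7*r^6 + 6*r^5 - 10*r^4 + 16*r^3 - 24*r^2 - 4*r + 9) r := by
  have h := ((((((hasDerivAt_pow 7 r).add (hasDerivAt_pow 6 r)).sub
      ((hasDerivAt_pow 5 r).const_mul 2)).add ((hasDerivAt_pow 4 r).const_mul 4)).sub
      ((hasDerivAt_pow 3 r).const_mul 8)).sub ((hasDerivAt_pow 2 r).const_mul 2)).add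
      (((hasDerivAt_id r).const_mul 9).sub_const 3)
  have hfun : Pfun = (fun x : ℝ => x ^ 7 + x ^ 6 - 2 * x ^ 5 + 4 * x ^ 4 - 8 * x ^ 3
      - 2 * x ^ 2 + (9 * id x - 3)) := by
    funext x; simp only [Pfun, id]; ring
  rw [hfun]
  exact h.congr_deriv (by norm_num; ring)

lemma Pfun_strictMono : StrictMonoOn Pfun (Set.Icc (0:ℝ) (1/2)) := by
  apply strictMonoOn_of_deriv_pos (convex_Icc _ _)
  · exact Continuous.continuousOn (by unfold Pfun; continuity)
  · intro r hr
    rw [interior_Icc, Set.mem_Ioo] at hr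
    rw [(Pfun_hasDeriv r).deriv]
    nlinarith [hr.1, hr.2, pow_nonneg hr.1.le 6, pow_nonneg hr.1.le 5,
      pow_nonneg hr.1.le 3, sq_nonneg r, mul_pos hr.1 hr.1,
      mul_nonneg (mul_nonneg hr.1.le hr.1.le) hr.1.le]

lemma key_iff (r : ℝ) :
    (r - 1) * (r^4 + r^2)
        = (r^7 + r^6 + 4*r^5 - 2*r^4 - 2*r^3 - 8*r^2 + 9*r - 3) / 6 ↔ Pfun r = 0 := by
  unfold Pfun
  constructor <;> intro h
  · linear_combination (-6 : ℝ) * h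
  · linear_combination (-1/6 : ℝ) * h

theorem stmt11 :
    ∃ r₀ : ℝ, (0 < r₀ ∧ r₀ < 1/2 ∧
      (r₀ - 1) * (r₀^4 + r₀^2)
        = (r₀^7 + r₀^6 + 4*r₀^5 - 2*r₀^4 - 2*r₀^3 - 8*r₀^2 + 9*r₀ - 3) / 6) ∧
    (∀ r : ℝ, 0 < r → r < 1/2 →
      (r - 1) * (r^4 + r^2)
        = (r^7 + r^6 + 4*r^5 - 2*r^4 - 2*r^3 - 8*r^2 + 9*r - 3) / 6 → r = r₀) ∧
    0.435 < r₀ ∧ r₀ < 0.4351 := by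
  have hcont : ContinuousOn Pfun (Set.Icc (0.435:ℝ) 0.4351) :=
    Continuous.continuousOn (by unfold Pfun; continuity)
  have ha : Pfun 0.435 < 0 := by unfold Pfun; norm_num
  have hb : (0:ℝ) < Pfun 0.4351 := by unfold Pfun; norm_num
  have hsub := intermediate_value_Ioo (by norm_num : (0.435:ℝ) ≤ 0.4351) hcont
  have h0 : (0:ℝ) ∈ Set.Ioo (Pfun 0.435) (Pfun 0.4351) := ⟨ha, hb⟩
  obtain ⟨r₀, hr₀mem, hr₀⟩ := hsub h0
  obtain ⟨h1, h2⟩ := hr₀mem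
  have hr₀pos : (0:ℝ) < r₀ := by linarith
  have hr₀lt : r₀ < 1/2 := by linarith
  refine ⟨r₀, ⟨hr₀pos, hr₀lt, (key_iff r₀).mpr hr₀⟩, ?_, h1, h2⟩
  intro r hr1 hr2 heq
  have hP : Pfun r = 0 := (key_iff r).mp heq
  exact Pfun_strictMono.injOn ⟨hr1.le, hr2.le⟩ ⟨hr₀pos.le, hr₀lt.le⟩ (by rw [hP, hr₀])
end

section
/- Let $0<r<1/2$, $P$ the uniform Cantor distribution with ratio $r$, $V=\frac{1-r}{4(1+r)}$. For each $k\ge1$, the set $\beta=\{S_\sigma(1/2):\sigma\in\{1,2\}^k\}$ of the $2^k$ cylinder midpoints satisfies $\int\min_{a\in\beta}(x-a)^2\,dP(x)=r^{2k}V$. -/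
open MeasureTheory
open scoped ENNReal

lemma Smap0_s14 (r x : ℝ) : Smap r 0 x = r * x := rfl
lemma Smap1_s14 (r x : ℝ) : Smap r 1 x = r * x + (1 - r) := rfl
lemma Sword_cons (r : ℝ) (i : Fin 2) (l : List (Fin 2)) :
    Sword r (i :: l) = Smap r i ∘ Sword r l := rfl

def Bset (r : ℝ) (k : ℕ) : Set ℝ :=
  {y | ∃ σ : Fin k → Fin 2, y = Sword r (List.ofFn σ) (1/2)}

lemma Bset_eq_range (r : ℝ) (k : ℕ) :
    Bset r k = Set.range (fun σ : Fin k → Fin 2 => Sword r (List.ofFn σ) (1/2)) := by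
  ext y; simp [Bset, Set.range, eq_comm]

lemma Bset_nonempty (r : ℝ) (k : ℕ) : (Bset r k).Nonempty := by
  rw [Bset_eq_range]; exact Set.range_nonempty _

lemma Bset_finite (r : ℝ) (k : ℕ) : (Bset r k).Finite := by
  rw [Bset_eq_range]; exact Set.finite_range _

lemma Bset_zero (r : ℝ) : Bset r 0 = {(1/2 : ℝ)} := by
  ext y
  constructor
  · rintro ⟨σ, rfl⟩; simp [List.ofFn_zero, Sword]
  · rintro rfl; exact ⟨fun i => 0, by simp [List.ofFn_zero, Sword]⟩

lemma Bset_succ (r : ℝ) (k : ℕ) :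
    Bset r (k+1) = Smap r 0 '' Bset r k ∪ Smap r 1 '' Bset r k := by
  ext y
  constructor
  · rintro ⟨σ, rfl⟩
    have h : List.ofFn σ = σ 0 :: List.ofFn (fun j : Fin k => σ j.succ) := List.ofFn_succ
    have h2 : σ 0 = 0 ∨ σ 0 = 1 := by omega
    rcases h2 with h2 | h2
    · left
      exact ⟨Sword r (List.ofFn (fun j : Fin k => σ j.succ)) (1/2),
        ⟨_, rfl⟩, by rw [h, Sword_cons, h2]; rfl⟩
    · right
      exact ⟨Sword r (List.ofFn (fun j : Fin k => σ j.succ)) (1/2),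
        ⟨_, rfl⟩, by rw [h, Sword_cons, h2]; rfl⟩
  · rintro (⟨a, ⟨τ, rfl⟩, rfl⟩ | ⟨a, ⟨τ, rfl⟩, rfl⟩)
    · refine ⟨Fin.cons 0 τ, ?_⟩
      rw [List.ofFn_succ, Sword_cons]
      simp [Fin.cons_succ]
    · refine ⟨Fin.cons 1 τ, ?_⟩
      rw [List.ofFn_succ, Sword_cons]
      simp [Fin.cons_succ]

lemma Bset_bounds {r : ℝ} (hr1 : 0 < r) (hr2 : r < 1/2) (k : ℕ) :
    ∀ y ∈ Bset r k, r^k/2 ≤ y ∧ y ≤ 1 - r^k/2 := by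
  induction k with
  | zero => intro y hy; rw [Bset_zero] at hy; subst hy; norm_num
  | succ k ih =>
    intro y hy
    rw [Bset_succ] at hy
    have hp : r^(k+1) = r * r^k := by ring
    have hrk : (0:ℝ) < r^k := pow_pos hr1 k
    rcases hy with ⟨b, hb, rfl⟩ | ⟨b, hb, rfl⟩
    · obtain ⟨h1, h2⟩ := ih b hb
      rw [Smap0_s14]
      constructor
      · nlinarith [mul_le_mul_of_nonneg_left h1 hr1.le]
      · nlinarith [mul_le_mul_of_nonneg_left h2 hr1.le]
    · obtain ⟨h1, h2⟩ := ih b hb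
      rw [Smap1_s14]
      constructor
      · nlinarith [mul_le_mul_of_nonneg_left h1 hr1.le]
      · nlinarith [mul_le_mul_of_nonneg_left h2 hr1.le]

noncomputable def Ffun (r : ℝ) (k : ℕ) (x : ℝ) : ℝ :=
  sInf ((fun a => (x - a)^2) '' Bset r k)

lemma Fimg_nonempty (r : ℝ) (k : ℕ) (x : ℝ) :
    ((fun a => (x - a)^2) '' Bset r k).Nonempty := (Bset_nonempty r k).image _

lemma Fimg_bdd (r : ℝ) (k : ℕ) (x : ℝ) :
    BddBelow ((fun a => (x - a)^2) '' Bset r k) := ((Bset_finite r k).image _).bddBelow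

lemma Ffun_nonneg (r : ℝ) (k : ℕ) (x : ℝ) : 0 ≤ Ffun r k x :=
  le_csInf (Fimg_nonempty r k x) (by rintro _ ⟨a, _, rfl⟩; positivity)

lemma Ffun_le (r : ℝ) (k : ℕ) (x a : ℝ) (ha : a ∈ Bset r k) :
    Ffun r k x ≤ (x - a)^2 :=
  csInf_le (Fimg_bdd r k x) (Set.mem_image_of_mem _ ha)

lemma Ffun_zero (r : ℝ) (x : ℝ) : Ffun r 0 x = (x - 1/2)^2 := by
  rw [Ffun, Bset_zero]; simp

lemma Ffun_measurable (r : ℝ) (k : ℕ) : Measurable (Ffun r k) := by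
  have h : Ffun r k = fun x =>
      ⨅ σ : Fin k → Fin 2, (x - Sword r (List.ofFn σ) (1/2))^2 := by
    funext x
    rw [Ffun, Bset_eq_range, ← Set.range_comp, iInf]
    rfl
  rw [h]
  exact Measurable.iInf fun σ => by fun_prop

lemma key {r : ℝ} (hr1 : 0 < r) (hr2 : r < 1/2) (k : ℕ) {y : ℝ}
    (hy : y ∈ Set.Icc (0:ℝ) 1) (hC : Ffun r k y ≤ (r^k/2)^2) (i : Fin 2) :
    Ffun r (k+1) (Smap r i y) = r^2 * Ffun r k y := by
  obtain ⟨hy0, hy1⟩ := hy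
  have hrk : (0:ℝ) < r^k := pow_pos hr1 k
  have hp : r^(k+1) = r * r^k := by ring
  set x := Smap r i y with hx
  -- the image splits into own-branch and other-branch parts
  have hsplit : (fun a => (x - a)^2) '' Bset r (k+1) =
      ((fun b => (x - Smap r 0 b)^2) '' Bset r k) ∪
      ((fun b => (x - Smap r 1 b)^2) '' Bset r k) := by
    rw [Bset_succ, Set.image_union, Set.image_image, Set.image_image]
  -- own branch: scaling
  have hown : ∀ b : ℝ, (x - Smap r i b)^2 = r^2 * (y - b)^2 := by
    intro b
    have h2 : i = 0 ∨ i = 1 := by omega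
    rcases h2 with rfl | rfl <;> simp only [hx, Smap0_s14, Smap1_s14] <;> ring
  have hownInf : sInf ((fun b => (x - Smap r i b)^2) '' Bset r k) = r^2 * Ffun r k y := by
    have : (fun b => (x - Smap r i b)^2) '' Bset r k
        = (fun t => r^2 * t) '' ((fun b => (y - b)^2) '' Bset r k) := by
      rw [Set.image_image]
      exact Set.image_congr (fun b _ => hown b)
    rw [this]
    have := Real.sInf_smul_of_nonneg (a := r^2) (by positivity) ((fun b => (y - b)^2) '' Bset r k)
    simpa [← Set.image_smul, smul_eq_mul, Ffun] using this
  -- bound for the own branch infimum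
  have hownle : r^2 * Ffun r k y ≤ (r^(k+1)/2)^2 := by
    have := mul_le_mul_of_nonneg_left hC (by positivity : (0:ℝ) ≤ r^2)
    calc r^2 * Ffun r k y ≤ r^2 * (r^k/2)^2 := this
      _ = (r^(k+1)/2)^2 := by ring
  -- other branch: everything is far
  have hother : ∀ z ∈ ((fun b => (x - Smap r (1-i) b)^2) '' Bset r k),
      (r^(k+1)/2)^2 ≤ z := by
    rintro _ ⟨b, hb, rfl⟩
    obtain ⟨hb1, hb2⟩ := Bset_bounds hr1 hr2 k b hb
    have h2 : i = 0 ∨ i = 1 := by omega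
    have hd : 1 - 2*r + r^(k+1)/2 ≤ |x - Smap r (1-i) b| := by
      rcases h2 with rfl | rfl
      · have e1 : ((1:Fin 2) - 0) = 1 := rfl
        rw [hx, e1, Smap0_s14, Smap1_s14, abs_sub_comm,
          abs_of_nonneg (by nlinarith [mul_le_mul_of_nonneg_left hb1 hr1.le, mul_le_mul_of_nonneg_left hy1 hr1.le])]
        nlinarith [mul_le_mul_of_nonneg_left hb1 hr1.le, mul_le_mul_of_nonneg_left hy1 hr1.le]
      · have e1 : ((1:Fin 2) - 1) = 0 := rfl
        rw [hx, e1, Smap0_s14, Smap1_s14,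
          abs_of_nonneg (by nlinarith [mul_le_mul_of_nonneg_left hb2 hr1.le, mul_le_mul_of_nonneg_left hy0 hr1.le])]
        nlinarith [mul_le_mul_of_nonneg_left hb2 hr1.le, mul_le_mul_of_nonneg_left hy0 hr1.le]
    have hd0 : (0:ℝ) ≤ r^(k+1)/2 := by positivity
    have : r^(k+1)/2 ≤ |x - Smap r (1-i) b| := by nlinarith
    calc (r^(k+1)/2)^2 ≤ |x - Smap r (1-i) b|^2 := by
          exact pow_le_pow_left₀ hd0 this 2
      _ = (x - Smap r (1-i) b)^2 := sq_abs _
  have hotherInf : (r^(k+1)/2)^2 ≤ sInf ((fun b => (x - Smap r (1-i) b)^2) '' Bset r k) :=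
    le_csInf ((Bset_nonempty r k).image _) hother
  -- put it together
  have h2 : i = 0 ∨ i = 1 := by omega
  have hunion : Ffun r (k+1) x =
      min (sInf ((fun b => (x - Smap r i b)^2) '' Bset r k))
          (sInf ((fun b => (x - Smap r (1-i) b)^2) '' Bset r k)) := by
    rw [Ffun, hsplit, csInf_union (((Bset_finite r k).image _).bddBelow)
      ((Bset_nonempty r k).image _)
      (((Bset_finite r k).image _).bddBelow) ((Bset_nonempty r k).image _)]
    rcases h2 with rfl | rfl
    · rfl
    · rw [show ((1:Fin 2)-1) = 0 from rfl]
      exact min_comm _ _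
  rw [hunion, min_eq_left (le_trans (hownInf ▸ hownle) hotherInf), hownInf]

def Aset (r : ℝ) : ℕ → Set ℝ
  | 0 => Set.Icc 0 1
  | (k+1) => Smap r 0 '' Aset r k ∪ Smap r 1 '' Aset r k

lemma Smap_continuous (r : ℝ) (i : Fin 2) : Continuous (Smap r i) := by
  have h2 : i = 0 ∨ i = 1 := by omega
  rcases h2 with rfl | rfl
  · show Continuous fun x => r * x
    fun_prop
  · show Continuous fun x => r * x + (1 - r)
    fun_prop

lemma Smap_measurable (r : ℝ) (i : Fin 2) : Measurable (Smap r i) :=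
  (Smap_continuous r i).measurable

lemma Aset_compact (r : ℝ) (k : ℕ) : IsCompact (Aset r k) := by
  induction k with
  | zero => exact isCompact_Icc
  | succ k ih =>
    exact (ih.image (Smap_continuous r 0)).union (ih.image (Smap_continuous r 1))

lemma Aset_subset_Icc {r : ℝ} (hr1 : 0 < r) (hr2 : r < 1/2) (k : ℕ) :
    Aset r k ⊆ Set.Icc 0 1 := by
  induction k with
  | zero => exact le_refl _
  | succ k ih =>
    rintro y (⟨z, hz, rfl⟩ | ⟨z, hz, rfl⟩) <;>
      obtain ⟨h0, h1⟩ := ih hz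
    · rw [Smap0_s14]; constructor <;> nlinarith
    · rw [Smap1_s14]; constructor <;> nlinarith

lemma Ffun_bound {r : ℝ} (hr1 : 0 < r) (hr2 : r < 1/2) (k : ℕ) :
    ∀ y ∈ Aset r k, Ffun r k y ≤ (r^k/2)^2 := by
  induction k with
  | zero =>
    rintro y ⟨h0, h1⟩
    rw [Ffun_zero]
    norm_num
    nlinarith
  | succ k ih =>
    rintro y (⟨z, hz, rfl⟩ | ⟨z, hz, rfl⟩)
    · rw [key hr1 hr2 k (Aset_subset_Icc hr1 hr2 k hz) (ih z hz) 0]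
      calc r^2 * Ffun r k z ≤ r^2 * (r^k/2)^2 :=
            mul_le_mul_of_nonneg_left (ih z hz) (by positivity)
        _ = (r^(k+1)/2)^2 := by ring
    · rw [key hr1 hr2 k (Aset_subset_Icc hr1 hr2 k hz) (ih z hz) 1]
      calc r^2 * Ffun r k z ≤ r^2 * (r^k/2)^2 :=
            mul_le_mul_of_nonneg_left (ih z hz) (by positivity)
        _ = (r^(k+1)/2)^2 := by ring

lemma Ffun_rec {r : ℝ} (hr1 : 0 < r) (hr2 : r < 1/2) (k : ℕ) {y : ℝ}
    (hy : y ∈ Aset r k) (i : Fin 2) :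
    Ffun r (k+1) (Smap r i y) = r^2 * Ffun r k y :=
  key hr1 hr2 k (Aset_subset_Icc hr1 hr2 k hy) (Ffun_bound hr1 hr2 k y hy) i

section Meas

variable {r : ℝ} (hr1 : 0 < r) (hr2 : r < 1/2)
  (P : Measure ℝ) [IsProbabilityMeasure P]
  (hP : P = (2 : ℝ≥0∞)⁻¹ • P.map (Smap r 0) + (2 : ℝ≥0∞)⁻¹ • P.map (Smap r 1))

include hr1 hr2 hP

lemma P_apply_step (s t : Set ℝ) (hs : MeasurableSet s) (ht : MeasurableSet t)
    (h0 : Smap r 0 ⁻¹' s ⊆ t) (h1 : Smap r 1 ⁻¹' s ⊆ t) : P s ≤ P t := by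
  conv_lhs => rw [hP]
  rw [Measure.add_apply, Measure.smul_apply, Measure.smul_apply,
    Measure.map_apply (Smap_measurable r 0) hs, Measure.map_apply (Smap_measurable r 1) hs]
  calc (2:ℝ≥0∞)⁻¹ • P (Smap r 0 ⁻¹' s) + (2:ℝ≥0∞)⁻¹ • P (Smap r 1 ⁻¹' s)
      ≤ (2:ℝ≥0∞)⁻¹ • P t + (2:ℝ≥0∞)⁻¹ • P t := by
        gcongr <;> exact measure_mono ‹_›
    _ = P t := by
        simp only [smul_eq_mul]
        rw [← mul_add, ← two_mul, ← mul_assoc,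
          ENNReal.inv_mul_cancel (by norm_num) (by norm_num), one_mul]

lemma P_tail_right : P (Set.Ioi (1:ℝ)) = 0 := by
  have step : ∀ t : ℝ, 0 < t → P (Set.Ioi (1+t)) ≤ P (Set.Ioi (1+2*t)) := by
    intro t ht
    refine P_apply_step hr1 hr2 P hP _ _ measurableSet_Ioi measurableSet_Ioi ?_ ?_
    · intro x hx
      simp only [Set.mem_preimage, Smap0_s14, Set.mem_Ioi] at hx ⊢
      nlinarith
    · intro x hx
      simp only [Set.mem_preimage, Smap1_s14, Set.mem_Ioi] at hx ⊢
      nlinarith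
  have iter : ∀ t : ℝ, 0 < t → ∀ n : ℕ, P (Set.Ioi (1+t)) ≤ P (Set.Ioi (1+2^n*t)) := by
    intro t ht n
    induction n with
    | zero => norm_num
    | succ n ih =>
      refine ih.trans ?_
      have := step (2^n*t) (by positivity)
      calc P (Set.Ioi (1+2^n*t)) ≤ P (Set.Ioi (1+2*(2^n*t))) := this
        _ = P (Set.Ioi (1+2^(n+1)*t)) := by ring_nf
  have zero : ∀ t : ℝ, 0 < t → P (Set.Ioi (1+t)) = 0 := by
    intro t ht
    have hempty : ⋂ n : ℕ, Set.Ioi (1+2^n*t) = ∅ := by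
      ext x
      simp only [Set.mem_iInter, Set.mem_Ioi, Set.mem_empty_iff_false, iff_false, not_forall,
        not_lt]
      obtain ⟨n, hn⟩ := pow_unbounded_of_one_lt (x/t) (one_lt_two (α := ℝ))
      exact ⟨n, by nlinarith [(div_lt_iff₀ ht).mp hn]⟩
    have htend : Filter.Tendsto (fun n : ℕ => P (Set.Ioi (1+2^n*t))) Filter.atTop
        (nhds (P (⋂ n : ℕ, Set.Ioi (1+2^n*t)))) := by
      refine tendsto_measure_iInter_atTop (fun n => measurableSet_Ioi.nullMeasurableSet) ?_
        ⟨0, measure_ne_top P _⟩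
      intro n m hnm
      refine Set.Ioi_subset_Ioi ?_
      have : (2:ℝ)^n ≤ 2^m := pow_le_pow_right₀ (by norm_num) hnm
      nlinarith
    rw [hempty, measure_empty] at htend
    have := ge_of_tendsto' htend (fun n => iter t ht n)
    exact le_antisymm (le_of_le_of_eq this rfl) zero_le
  have hunion : Set.Ioi (1:ℝ) = ⋃ n : ℕ, Set.Ioi (1 + 1/((n:ℝ)+1)) := by
    ext x
    simp only [Set.mem_Ioi, Set.mem_iUnion]
    constructor
    · intro hx
      obtain ⟨n, hn⟩ := exists_nat_one_div_lt (sub_pos.mpr hx)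
      exact ⟨n, by linarith⟩
    · rintro ⟨n, hn⟩
      have : (0:ℝ) < 1/(n+1) := by positivity
      linarith
  rw [hunion]
  exact measure_iUnion_null (fun n => zero _ (by positivity))

lemma P_tail_left : P (Set.Iio (0:ℝ)) = 0 := by
  have step : ∀ t : ℝ, 0 < t → P (Set.Iio (-t)) ≤ P (Set.Iio (-(2*t))) := by
    intro t ht
    refine P_apply_step hr1 hr2 P hP _ _ measurableSet_Iio measurableSet_Iio ?_ ?_
    · intro x hx
      simp only [Set.mem_preimage, Smap0_s14, Set.mem_Iio] at hx ⊢
      nlinarith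
    · intro x hx
      simp only [Set.mem_preimage, Smap1_s14, Set.mem_Iio] at hx ⊢
      nlinarith
  have iter : ∀ t : ℝ, 0 < t → ∀ n : ℕ, P (Set.Iio (-t)) ≤ P (Set.Iio (-(2^n*t))) := by
    intro t ht n
    induction n with
    | zero => norm_num
    | succ n ih =>
      refine ih.trans ?_
      have := step (2^n*t) (by positivity)
      calc P (Set.Iio (-(2^n*t))) ≤ P (Set.Iio (-(2*(2^n*t)))) := this
        _ = P (Set.Iio (-(2^(n+1)*t))) := by ring_nf
  have zero : ∀ t : ℝ, 0 < t → P (Set.Iio (-t)) = 0 := by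
    intro t ht
    have hempty : ⋂ n : ℕ, Set.Iio (-(2^n*t)) = ∅ := by
      ext x
      simp only [Set.mem_iInter, Set.mem_Iio, Set.mem_empty_iff_false, iff_false, not_forall,
        not_lt]
      obtain ⟨n, hn⟩ := pow_unbounded_of_one_lt (-x/t) (one_lt_two (α := ℝ))
      exact ⟨n, by nlinarith [(div_lt_iff₀ ht).mp hn]⟩
    have htend : Filter.Tendsto (fun n : ℕ => P (Set.Iio (-(2^n*t)))) Filter.atTop
        (nhds (P (⋂ n : ℕ, Set.Iio (-(2^n*t))))) := by
      refine tendsto_measure_iInter_atTop (fun n => measurableSet_Iio.nullMeasurableSet) ?_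
        ⟨0, measure_ne_top P _⟩
      intro n m hnm
      refine Set.Iio_subset_Iio ?_
      have : (2:ℝ)^n ≤ 2^m := pow_le_pow_right₀ (by norm_num) hnm
      nlinarith
    rw [hempty, measure_empty] at htend
    have := ge_of_tendsto' htend (fun n => iter t ht n)
    exact le_antisymm this zero_le
  have hunion : Set.Iio (0:ℝ) = ⋃ n : ℕ, Set.Iio (-(1/((n:ℝ)+1))) := by
    ext x
    simp only [Set.mem_Iio, Set.mem_iUnion]
    constructor
    · intro hx
      obtain ⟨n, hn⟩ := exists_nat_one_div_lt (neg_pos.mpr hx)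
      exact ⟨n, by linarith⟩
    · rintro ⟨n, hn⟩
      have : (0:ℝ) < 1/(n+1) := by positivity
      linarith
  rw [hunion]
  exact measure_iUnion_null (fun n => zero _ (by positivity))

lemma P_Icc : P (Set.Icc (0:ℝ) 1) = 1 := by
  rw [← prob_compl_eq_zero_iff measurableSet_Icc]
  have : (Set.Icc (0:ℝ) 1)ᶜ ⊆ Set.Iio 0 ∪ Set.Ioi 1 := by
    intro x hx
    simp only [Set.mem_compl_iff, Set.mem_Icc, not_and_or, not_le] at hx
    rcases hx with h | h
    · exact Or.inl h
    · exact Or.inr h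
  refine le_antisymm (le_trans (measure_mono this) ?_) zero_le
  calc P (Set.Iio 0 ∪ Set.Ioi 1) ≤ P (Set.Iio 0) + P (Set.Ioi 1) := measure_union_le _ _
    _ = 0 := by rw [P_tail_left hr1 hr2 P hP, P_tail_right hr1 hr2 P hP, add_zero]

lemma P_Aset (k : ℕ) : P (Aset r k) = 1 := by
  induction k with
  | zero => exact P_Icc hr1 hr2 P hP
  | succ k ih =>
    refine le_antisymm prob_le_one ?_
    have key2 : (1:ℝ≥0∞) ≤ P (Aset r (k+1)) := by
      conv_rhs => rw [hP]
      rw [Measure.add_apply, Measure.smul_apply, Measure.smul_apply,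
        Measure.map_apply (Smap_measurable r 0) (Aset_compact r (k+1)).measurableSet,
        Measure.map_apply (Smap_measurable r 1) (Aset_compact r (k+1)).measurableSet]
      have h0 : Aset r k ⊆ Smap r 0 ⁻¹' Aset r (k+1) := fun z hz =>
        Or.inl ⟨z, hz, rfl⟩
      have h1 : Aset r k ⊆ Smap r 1 ⁻¹' Aset r (k+1) := fun z hz =>
        Or.inr ⟨z, hz, rfl⟩
      calc (1:ℝ≥0∞) = (2:ℝ≥0∞)⁻¹ • P (Aset r k) + (2:ℝ≥0∞)⁻¹ • P (Aset r k) := by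
            simp only [ih, smul_eq_mul, mul_one]
            rw [ENNReal.inv_two_add_inv_two]
        _ ≤ _ := by gcongr <;> exact measure_mono ‹_›
    exact key2

lemma P_ae_Icc : ∀ᵐ x ∂P, x ∈ Set.Icc (0:ℝ) 1 := by
  rw [ae_iff]
  have : {x : ℝ | ¬ x ∈ Set.Icc (0:ℝ) 1} = (Set.Icc (0:ℝ) 1)ᶜ := rfl
  rw [this, prob_compl_eq_zero_iff measurableSet_Icc]
  exact P_Icc hr1 hr2 P hP

lemma P_ae_Aset (k : ℕ) : ∀ᵐ x ∂P, x ∈ Aset r k := by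
  rw [ae_iff]
  have : {x : ℝ | ¬ x ∈ Aset r k} = (Aset r k)ᶜ := rfl
  rw [this, prob_compl_eq_zero_iff (Aset_compact r k).measurableSet]
  exact P_Aset hr1 hr2 P hP k

lemma integrable_of_bound (f : ℝ → ℝ) (hf : Measurable f) (C : ℝ)
    (hb : ∀ x ∈ Set.Icc (0:ℝ) 1, |f x| ≤ C) : Integrable f P := by
  refine (integrable_const C).mono' hf.aestronglyMeasurable ?_
  filter_upwards [P_ae_Icc hr1 hr2 P hP] with x hx
  simpa [Real.norm_eq_abs] using hb x hx

lemma integral_split (f : ℝ → ℝ) (hf : Measurable f)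
    (h0 : Integrable (fun x => f (Smap r 0 x)) P)
    (h1 : Integrable (fun x => f (Smap r 1 x)) P) :
    ∫ x, f x ∂P
      = (1/2) * ∫ x, f (Smap r 0 x) ∂P + (1/2) * ∫ x, f (Smap r 1 x) ∂P := by
  have i0 : Integrable f ((2:ℝ≥0∞)⁻¹ • P.map (Smap r 0)) := by
    refine Integrable.smul_measure ?_ (by norm_num)
    exact (integrable_map_measure hf.aestronglyMeasurable
      (Smap_measurable r 0).aemeasurable).2 h0
  have i1 : Integrable f ((2:ℝ≥0∞)⁻¹ • P.map (Smap r 1)) := by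
    refine Integrable.smul_measure ?_ (by norm_num)
    exact (integrable_map_measure hf.aestronglyMeasurable
      (Smap_measurable r 1).aemeasurable).2 h1
  conv_lhs => rw [hP]
  rw [integral_add_measure i0 i1, integral_smul_measure, integral_smul_measure,
    integral_map (Smap_measurable r 0).aemeasurable hf.aestronglyMeasurable,
    integral_map (Smap_measurable r 1).aemeasurable hf.aestronglyMeasurable]
  norm_num [ENNReal.toReal_inv, smul_eq_mul]

lemma int_base : ∫ x, (x - 1/2)^2 ∂P = (1-r)/(4*(1+r)) := by
  set f : ℝ → ℝ := fun x => (x - 1/2)^2 with hfdef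
  have hf : Measurable f := by fun_prop
  have hint : Integrable f P := by
    refine integrable_of_bound hr1 hr2 P hP f hf 1 ?_
    rintro x ⟨h0, h1⟩
    rw [abs_of_nonneg (by positivity)]
    simp only [hfdef]
    nlinarith
  have h0 : Integrable (fun x => f (Smap r 0 x)) P := by
    refine integrable_of_bound hr1 hr2 P hP _ (hf.comp (Smap_measurable r 0)) 1 ?_
    rintro x ⟨hx0, hx1⟩
    rw [abs_of_nonneg (by positivity)]
    simp only [hfdef, Smap0_s14]
    have hrx0 : 0 ≤ r*x := mul_nonneg hr1.le hx0
    have hrx1 : r*x ≤ r := mul_le_of_le_one_right hr1.le hx1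
    nlinarith
  have h1 : Integrable (fun x => f (Smap r 1 x)) P := by
    refine integrable_of_bound hr1 hr2 P hP _ (hf.comp (Smap_measurable r 1)) 1 ?_
    rintro x ⟨hx0, hx1⟩
    rw [abs_of_nonneg (by positivity)]
    simp only [hfdef, Smap1_s14]
    have hrx0 : 0 ≤ r*x := mul_nonneg hr1.le hx0
    have hrx1 : r*x ≤ r := mul_le_of_le_one_right hr1.le hx1
    nlinarith
  have hsplit := integral_split hr1 hr2 P hP f hf h0 h1
  have hcomb : (1/2) * ∫ x, f (Smap r 0 x) ∂P + (1/2) * ∫ x, f (Smap r 1 x) ∂P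
      = ∫ x, ((1/2) * f (Smap r 0 x) + (1/2) * f (Smap r 1 x)) ∂P := by
    rw [integral_add (h0.const_mul _) (h1.const_mul _), integral_const_mul,
      integral_const_mul]
  have hpt : ∀ x : ℝ, (1/2) * f (Smap r 0 x) + (1/2) * f (Smap r 1 x)
      = r^2 * f x + (1-r)^2/4 := by
    intro x
    simp only [hfdef, Smap0_s14, Smap1_s14]
    ring
  have heval : ∫ x, ((1/2) * f (Smap r 0 x) + (1/2) * f (Smap r 1 x)) ∂P
      = r^2 * ∫ x, f x ∂P + (1-r)^2/4 := by
    rw [show (fun x => (1/2) * f (Smap r 0 x) + (1/2) * f (Smap r 1 x))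
        = (fun x => r^2 * f x + (1-r)^2/4) from funext hpt]
    rw [integral_add (hint.const_mul _) (integrable_const _), integral_const_mul,
      integral_const]
    simp
  have heq : ∫ x, f x ∂P = r^2 * ∫ x, f x ∂P + (1-r)^2/4 :=
    hsplit.trans (hcomb.trans heval)
  have h1r : (1:ℝ) - r^2 ≠ 0 := by nlinarith
  have h1r' : (1:ℝ) + r ≠ 0 := by nlinarith
  have : (1 - r^2) * ∫ x, f x ∂P = (1-r)^2/4 := by linarith
  field_simp at this ⊢
  nlinarith [this]

lemma Ffun_le_one (k : ℕ) {z : ℝ} (hz : z ∈ Set.Icc (0:ℝ) 1) : Ffun r k z ≤ 1 := by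
  obtain ⟨a, ha⟩ := Bset_nonempty r k
  obtain ⟨ha1, ha2⟩ := Bset_bounds hr1 hr2 k a ha
  have hrk : (0:ℝ) < r^k := pow_pos hr1 k
  refine (Ffun_le r k z a ha).trans ?_
  obtain ⟨hz0, hz1⟩ := hz
  nlinarith

lemma int_rec (k : ℕ) :
    ∫ x, Ffun r (k+1) x ∂P = r^2 * ∫ x, Ffun r k x ∂P := by
  have hf : Measurable (Ffun r (k+1)) := Ffun_measurable r (k+1)
  have hbnd : ∀ i : Fin 2, Integrable (fun x => Ffun r (k+1) (Smap r i x)) P := by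
    intro i
    refine integrable_of_bound hr1 hr2 P hP _ (hf.comp (Smap_measurable r i)) 1 ?_
    rintro x ⟨hx0, hx1⟩
    rw [abs_of_nonneg (Ffun_nonneg _ _ _)]
    refine Ffun_le_one hr1 hr2 P hP (k+1) ?_
    have h2 : i = 0 ∨ i = 1 := by omega
    rcases h2 with rfl | rfl
    · rw [Smap0_s14]; constructor <;> nlinarith
    · rw [Smap1_s14]; constructor <;> nlinarith
  have hsplit := integral_split hr1 hr2 P hP (Ffun r (k+1)) hf (hbnd 0) (hbnd 1)
  have hcongr : ∀ i : Fin 2, ∫ x, Ffun r (k+1) (Smap r i x) ∂P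
      = ∫ x, r^2 * Ffun r k x ∂P := by
    intro i
    refine integral_congr_ae ?_
    filter_upwards [P_ae_Aset hr1 hr2 P hP k] with x hx
    exact Ffun_rec hr1 hr2 k hx i
  rw [hsplit, hcongr 0, hcongr 1, integral_const_mul]
  ring

lemma int_main (k : ℕ) :
    ∫ x, Ffun r k x ∂P = r^(2*k) * ((1-r)/(4*(1+r))) := by
  induction k with
  | zero =>
    rw [show Ffun r 0 = fun x => (x - 1/2)^2 from funext (Ffun_zero r)]
    simpa using int_base hr1 hr2 P hP
  | succ k ih =>
    rw [int_rec hr1 hr2 P hP k, ih]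
    ring

end Meas

theorem stmt14 (r : ℝ) (hr1 : 0 < r) (hr2 : r < 1/2)
    (P : Measure ℝ) [IsProbabilityMeasure P]
    (hP : P = (2 : ℝ≥0∞)⁻¹ • P.map (Smap r 0) + (2 : ℝ≥0∞)⁻¹ • P.map (Smap r 1))
    (k : ℕ) (hk : 1 ≤ k) :
    ∫ x, sInf ((fun a => (x - a)^2) ''
        {y | ∃ σ : Fin k → Fin 2, y = Sword r (List.ofFn σ) (1/2)}) ∂P
      = r^(2*k) * ((1 - r) / (4 * (1 + r))) := by
  exact int_main hr1 hr2 P hP k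
end
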